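/- Let H₁ and H₂ be Hilbert spaces, L : H₁ → H₂ a bounded linear operator, f : H₂ → ℝ comparable to ψ ↦ ‖L*ψ‖ in the sense that c₁‖L*ψ‖ ≤ f(ψ) ≤ c₂‖L*ψ‖ for some c₁, c₂ > 0 and all ψ. Then a nonzero φ ∈ H₂ lies in the range of L if and only if the infimum of f over the set {ψ ∈ H₂ : ⟨ψ, φ⟩ = 1} is strictly positive. -/

import Mathlib

open scoped InnerProductSpace

lemma mem_range_of_bound' {H₁ H₂ : Type*} [NormedAddCommGroup H₁] [InnerProductSpace ℂ H₁]
    [CompleteSpace H₁] [NormedAddCommGroup H₂] [InnerProductSpace ℂ H₂] [CompleteSpace H₂]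
    (L : H₁ →L[ℂ] H₂) (φ : H₂) (C : ℝ)
    (h : ∀ ψ : H₂, ‖⟪ψ, φ⟫_ℂ‖ ≤ C * ‖ContinuousLinearMap.adjoint L ψ‖) :
    φ ∈ Set.range L := by
  set A := ContinuousLinearMap.adjoint L with hA
  have wd : ∀ ψ ψ' : H₂, A ψ = A ψ' → ⟪φ, ψ⟫_ℂ = ⟪φ, ψ'⟫_ℂ := by
    intro ψ ψ' hpp
    have h1 : ‖⟪ψ - ψ', φ⟫_ℂ‖ ≤ C * ‖A (ψ - ψ')‖ := h _
    rw [map_sub, hpp, sub_self, norm_zero, mul_zero] at h1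
    have h2 : ⟪ψ - ψ', φ⟫_ℂ = 0 := norm_le_zero_iff.mp h1
    rw [inner_sub_left, sub_eq_zero] at h2
    have := congrArg (starRingEnd ℂ) h2
    simpa [inner_conj_symm] using this
  set M : Submodule ℂ H₁ := LinearMap.range (A : H₂ →ₗ[ℂ] H₁) with hM
  have memM : ∀ ψ : H₂, A ψ ∈ M := fun ψ => ⟨ψ, rfl⟩
  have spec : ∀ (v : M), A (v.2.choose) = (v : H₁) := fun v => v.2.choose_spec
  have wd' : ∀ (ψ : H₂) (v : M), A ψ = (v : H₁) → ⟪φ, v.2.choose⟫_ℂ = ⟪φ, ψ⟫_ℂ := by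
    intro ψ v hv
    exact wd _ _ (by rw [spec v, hv])
  set g₀ : M →ₗ[ℂ] ℂ :=
    { toFun := fun v => ⟪φ, v.2.choose⟫_ℂ
      map_add' := by
        intro v w
        have : A (v.2.choose + w.2.choose) = ((v + w : M) : H₁) := by
          rw [map_add, spec v, spec w]; rfl
        exact (wd' _ (v + w) this).trans (inner_add_right _ _ _)
      map_smul' := by
        intro c v
        have : A (c • v.2.choose) = ((c • v : M) : H₁) := by
          rw [map_smul, spec v]; rfl
        exact (wd' _ (c • v) this).trans (inner_smul_right _ _ _) } with hg₀
  have hbound : ∀ v : M, ‖g₀ v‖ ≤ C * ‖(v : H₁)‖ := by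
    intro v
    have h1 : ‖⟪v.2.choose, φ⟫_ℂ‖ ≤ C * ‖A v.2.choose‖ := h _
    rw [spec v] at h1
    calc ‖g₀ v‖ = ‖⟪φ, v.2.choose⟫_ℂ‖ := rfl
      _ = ‖⟪v.2.choose, φ⟫_ℂ‖ := norm_inner_symm _ _
      _ ≤ C * ‖(v : H₁)‖ := h1
  set g : M →L[ℂ] ℂ := LinearMap.mkContinuous g₀ C hbound with hg
  obtain ⟨G, hG, -⟩ := exists_extension_norm_eq M g
  set x := (InnerProductSpace.toDual ℂ H₁).symm G with hx
  refine ⟨x, ?_⟩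
  refine ext_inner_right ℂ (fun ψ => ?_)
  have h1 : ⟪L x, ψ⟫_ℂ = ⟪x, A ψ⟫_ℂ := (ContinuousLinearMap.adjoint_inner_right L x ψ).symm
  have h2 : ⟪x, A ψ⟫_ℂ = G (A ψ) := InnerProductSpace.toDual_symm_apply
  have h3 : G (A ψ) = g ⟨A ψ, memM ψ⟩ := hG ⟨A ψ, memM ψ⟩
  have h4 : g (⟨A ψ, memM ψ⟩ : M) = ⟪φ, ψ⟫_ℂ := wd' ψ ⟨A ψ, memM ψ⟩ rfl
  rw [h1, h2, h3, h4]
theorem stmt2 {H₁ H₂ : Type*} [NormedAddCommGroup H₁] [InnerProductSpace ℂ H₁] [CompleteSpace H₁]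
    [NormedAddCommGroup H₂] [InnerProductSpace ℂ H₂] [CompleteSpace H₂]
    (L : H₁ →L[ℂ] H₂) (f : H₂ → ℝ) (c₁ c₂ : ℝ) (hc₁ : 0 < c₁) (hc₂ : 0 < c₂)
    (hf : ∀ ψ : H₂, c₁ * ‖ContinuousLinearMap.adjoint L ψ‖ ≤ f ψ ∧
      f ψ ≤ c₂ * ‖ContinuousLinearMap.adjoint L ψ‖)
    (φ : H₂) (hφ : φ ≠ 0) :
    φ ∈ Set.range L ↔ 0 < sInf (f '' {ψ : H₂ | ⟪ψ, φ⟫_ℂ = 1}) := by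
  set A := ContinuousLinearMap.adjoint L with hA
  set S : Set H₂ := {ψ : H₂ | ⟪ψ, φ⟫_ℂ = 1} with hS
  have hfnn : ∀ ψ : H₂, 0 ≤ f ψ := fun ψ =>
    le_trans (mul_nonneg hc₁.le (norm_nonneg _)) (hf ψ).1
  have hbdd : BddBelow (f '' S) := ⟨0, by rintro y ⟨ψ, -, rfl⟩; exact hfnn ψ⟩
  have hφn : (‖φ‖ : ℂ) ≠ 0 := Complex.ofReal_ne_zero.mpr (norm_ne_zero_iff.mpr hφ)
  have hne : S.Nonempty := by
    refine ⟨((‖φ‖ : ℂ) ^ 2)⁻¹ • φ, ?_⟩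
    show ⟪((‖φ‖ : ℂ) ^ 2)⁻¹ • φ, φ⟫_ℂ = 1
    rw [inner_smul_left, inner_self_eq_norm_sq_to_K, map_inv₀, map_pow, Complex.conj_ofReal]
    exact inv_mul_cancel₀ (pow_ne_zero 2 hφn)
  constructor
  · rintro ⟨x, rfl⟩
    have hx0 : x ≠ 0 := by rintro rfl; exact hφ (map_zero L)
    have hxn : 0 < ‖x‖ := norm_pos_iff.mpr hx0
    have hlb : ∀ y ∈ f '' S, c₁ * ‖x‖⁻¹ ≤ y := by
      rintro y ⟨ψ, hψ, rfl⟩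
      have h1 : ⟪A ψ, x⟫_ℂ = 1 := by
        rw [hA, ContinuousLinearMap.adjoint_inner_left]; exact hψ
      have h2 : (1 : ℝ) ≤ ‖A ψ‖ * ‖x‖ := by
        calc (1 : ℝ) = ‖⟪A ψ, x⟫_ℂ‖ := by rw [h1]; simp
          _ ≤ ‖A ψ‖ * ‖x‖ := norm_inner_le_norm _ _
      have h3 : ‖x‖⁻¹ ≤ ‖A ψ‖ := by
        rw [inv_le_iff_one_le_mul₀ hxn]; linarith
      calc c₁ * ‖x‖⁻¹ ≤ c₁ * ‖A ψ‖ := by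
            exact mul_le_mul_of_nonneg_left h3 hc₁.le
        _ ≤ f ψ := (hf ψ).1
    exact lt_of_lt_of_le (mul_pos hc₁ (inv_pos.mpr hxn)) (le_csInf (hne.image f) hlb)
  · intro hpos
    set m := sInf (f '' S) with hm
    apply mem_range_of_bound' L φ (c₂ / m)
    intro ψ
    by_cases ha : ⟪ψ, φ⟫_ℂ = 0
    · rw [ha, norm_zero]
      exact mul_nonneg (div_nonneg hc₂.le hpos.le) (norm_nonneg _)
    · set a := ⟪ψ, φ⟫_ℂ with haa
      have han : 0 < ‖a‖ := norm_pos_iff.mpr ha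
      set ψ' := ((starRingEnd ℂ) a)⁻¹ • ψ with hψ'
      have hmem : ψ' ∈ S := by
        show ⟪((starRingEnd ℂ) a)⁻¹ • ψ, φ⟫_ℂ = 1
        rw [inner_smul_left, map_inv₀, RingHomCompTriple.comp_apply, RingHom.id_apply]
        exact inv_mul_cancel₀ ha
      have hAψ' : ‖A ψ'‖ = ‖a‖⁻¹ * ‖A ψ‖ := by
        rw [hψ', map_smul, norm_smul, norm_inv, RCLike.norm_conj]
      have key : m ≤ c₂ * (‖a‖⁻¹ * ‖A ψ‖) := by
        calc m ≤ f ψ' := csInf_le hbdd ⟨ψ', hmem, rfl⟩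
          _ ≤ c₂ * ‖A ψ'‖ := (hf ψ').2
          _ = c₂ * (‖a‖⁻¹ * ‖A ψ‖) := by rw [hAψ']
      rw [div_mul_eq_mul_div, le_div_iff₀ hpos]
      calc ‖a‖ * m ≤ ‖a‖ * (c₂ * (‖a‖⁻¹ * ‖A ψ‖)) :=
            mul_le_mul_of_nonneg_left key han.le
        _ = c₂ * ‖A ψ‖ := by field_simp [show ‖a‖ ≠ 0 from han.ne']
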